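/- Consider a commutative pullback square of categories with top map p̄* : W → Y, left map q̄* : W → X, right map q* : Y → Z, and bottom map p* : X → Z. If p* admits a fully faithful left adjoint p_!, then p̄* admits a fully faithful left adjoint p̄_!, which can be defined on objects by p̄_!(y) = (p_! q*(y), y). -/

import Mathlib

open CategoryTheory

universe v₁ v₂ v₃ u₁ u₂ u₃

variable {X : Type u₁} [Category.{v₁} X] {Y : Type u₂} [Category.{v₂} Y]
  {Z : Type u₃} [Category.{v₃} Z]

/-- The (pseudo-)pullback `X ×_Z Y` of two functors `pStar : X ⥤ Z` and `qStar : Y ⥤ Z`: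
objects are triples `(x, y, e)` where `e : pStar x ≅ qStar y`. -/
structure CatPullback (pStar : X ⥤ Z) (qStar : Y ⥤ Z) where
  x : X
  y : Y
  e : pStar.obj x ≅ qStar.obj y

namespace CatPullback

variable {pStar : X ⥤ Z} {qStar : Y ⥤ Z}

/-- Morphisms in the pullback of categories. -/
@[ext]
structure Hom (W₁ W₂ : CatPullback pStar qStar) where
  hx : W₁.x ⟶ W₂.x
  hy : W₁.y ⟶ W₂.y
  w : pStar.map hx ≫ W₂.e.hom = W₁.e.hom ≫ qStar.map hy := by aesop_cat

instance : Category (CatPullback pStar qStar) where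
  Hom := Hom
  id W := { hx := 𝟙 W.x, hy := 𝟙 W.y }
  comp u v :=
    { hx := u.hx ≫ v.hx
      hy := u.hy ≫ v.hy
      w := by simp only [Functor.map_comp, Category.assoc, v.w, reassoc_of% u.w] }

/-- The projection `X ×_Z Y ⥤ Y`. -/
@[simps]
def pbarStar (pStar : X ⥤ Z) (qStar : Y ⥤ Z) : CatPullback pStar qStar ⥤ Y where
  obj W := W.y
  map u := u.hy

/-- The projection `X ×_Z Y ⥤ X`. -/
@[simps]
def qbarStar (pStar : X ⥤ Z) (qStar : Y ⥤ Z) : CatPullback pStar qStar ⥤ X where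
  obj W := W.x
  map u := u.hx

end CatPullback

section Aux

variable {pStar : X ⥤ Z} {qStar : Y ⥤ Z} {pShriek : Z ⥤ X}

@[simp] lemma CatPullback.comp_hx {W₁ W₂ W₃ : CatPullback pStar qStar}
    (u : W₁ ⟶ W₂) (v : W₂ ⟶ W₃) : (u ≫ v).hx = u.hx ≫ v.hx := rfl

@[simp] lemma CatPullback.comp_hy {W₁ W₂ W₃ : CatPullback pStar qStar}
    (u : W₁ ⟶ W₂) (v : W₂ ⟶ W₃) : (u ≫ v).hy = u.hy ≫ v.hy := rfl

@[simp] lemma CatPullback.id_hx (W : CatPullback pStar qStar) :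
    (CategoryTheory.CategoryStruct.id W).hx = 𝟙 W.x := rfl

@[simp] lemma CatPullback.id_hy (W : CatPullback pStar qStar) :
    (CategoryTheory.CategoryStruct.id W).hy = 𝟙 W.y := rfl

lemma CatPullback.hom_ext {W₁ W₂ : CatPullback pStar qStar} {u v : W₁ ⟶ W₂}
    (h1 : u.hx = v.hx) (h2 : u.hy = v.hy) : u = v := CatPullback.Hom.ext h1 h2

/-- The candidate left adjoint. -/
@[simps]
noncomputable def pbarShriek (pStar : X ⥤ Z) (qStar : Y ⥤ Z) (pShriek : Z ⥤ X)
    (adj : pShriek ⊣ pStar) [pShriek.Full] [pShriek.Faithful] :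
    Y ⥤ CatPullback pStar qStar where
  obj y := ⟨pShriek.obj (qStar.obj y), y, (asIso (adj.unit.app (qStar.obj y))).symm⟩
  map f :=
    { hx := pShriek.map (qStar.map f)
      hy := f
      w := by
        have hn := adj.unit.naturality (qStar.map f)
        simp only [Functor.id_map, Functor.comp_map] at hn
        simp only [Iso.symm_hom, asIso_inv]
        rw [IsIso.comp_inv_eq, Category.assoc, IsIso.eq_inv_comp]
        exact hn.symm }
  map_id y := by apply CatPullback.hom_ext <;> simp
  map_comp f g := by apply CatPullback.hom_ext <;> simp

/-- The adjunction. -/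
noncomputable def pbarAdj (pStar : X ⥤ Z) (qStar : Y ⥤ Z) (pShriek : Z ⥤ X)
    (adj : pShriek ⊣ pStar) [pShriek.Full] [pShriek.Faithful] :
    pbarShriek pStar qStar pShriek adj ⊣ CatPullback.pbarStar pStar qStar :=
  Adjunction.mkOfHomEquiv
    { homEquiv := fun y W =>
        { toFun := fun u => u.hy
          invFun := fun g =>
            { hx := (adj.homEquiv _ _).symm (qStar.map g ≫ W.e.inv)
              hy := g
              w := by
                have h := (adj.homEquiv (qStar.obj y) W.x).apply_symm_apply
                  (qStar.map g ≫ W.e.inv)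
                rw [Adjunction.homEquiv_unit] at h
                simp only [pbarShriek_obj_e, pbarShriek_obj_y, Iso.symm_hom, asIso_inv,
                  CatPullback.pbarStar_obj]
                erw [IsIso.eq_inv_comp, ← Category.assoc, h, Category.assoc,
                  Iso.inv_hom_id, Category.comp_id]; rfl }
          left_inv := fun u => by
            apply CatPullback.hom_ext
            · apply (adj.homEquiv _ _).injective
              rw [Equiv.apply_symm_apply]
              erw [Adjunction.homEquiv_unit]
              have hw := u.w
              simp only [pbarShriek_obj_e, pbarShriek_obj_x, pbarShriek_obj_y, Iso.symm_hom,
                asIso_inv] at hw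
              erw [Iso.comp_inv_eq, Category.assoc, hw, ← Category.assoc,
                IsIso.hom_inv_id, Category.id_comp]
              rfl
            · rfl
          right_inv := fun g => rfl }
      homEquiv_naturality_left_symm := fun f g => by
        apply CatPullback.hom_ext
        · show (adj.homEquiv _ _).symm (qStar.map (f ≫ g) ≫ _) =
            pShriek.map (qStar.map f) ≫ (adj.homEquiv _ _).symm (qStar.map g ≫ _)
          erw [Functor.map_comp, Category.assoc, Adjunction.homEquiv_naturality_left_symm]
        · rfl
      homEquiv_naturality_right := fun u g => rfl }

end Aux

theorem stmt_8 (pStar : X ⥤ Z) (qStar : Y ⥤ Z) (pShriek : Z ⥤ X)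
    (adj : pShriek ⊣ pStar) (hff : pShriek.Full ∧ pShriek.Faithful) :
    ∃ pbarShriek : Y ⥤ CatPullback pStar qStar,
      Nonempty (pbarShriek ⊣ CatPullback.pbarStar pStar qStar) ∧
      pbarShriek.Full ∧ pbarShriek.Faithful ∧
      ∀ y : Y, (pbarShriek.obj y).x = pShriek.obj (qStar.obj y) ∧
        (pbarShriek.obj y).y = y := by
  obtain ⟨hfull, hfaith⟩ := hff
  have hu : ∀ y : Y, (pbarAdj pStar qStar pShriek adj).unit.app y = 𝟙 y := fun y => rfl
  have hiso : ∀ y : Y, IsIso ((pbarAdj pStar qStar pShriek adj).unit.app y) := fun y => by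
    rw [hu]; exact ⟨𝟙 y, Category.comp_id _, Category.comp_id _⟩
  have : IsIso (pbarAdj pStar qStar pShriek adj).unit := NatIso.isIso_of_isIso_app _
  have ff := (pbarAdj pStar qStar pShriek adj).fullyFaithfulLOfIsIsoUnit
  exact ⟨pbarShriek pStar qStar pShriek adj, ⟨pbarAdj pStar qStar pShriek adj⟩,
    ff.full, ff.faithful, fun y => ⟨rfl, rfl⟩⟩
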